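/- arXiv:1001.0559 — 3 statements merged into one kernel-verified Lean document; each statement's English description precedes it below -/
import Mathlib

section
/- (Denjoy–Wolff) Let f be holomorphic on the open unit disk 𝔻 with |f(z)| < 1 for all z ∈ 𝔻, and suppose f has no fixed point in 𝔻. Then there exists a boundary point α with |α| = 1 such that f contracts every horocycle at α: for all z, w ∈ 𝔻, if (1 − |w|²)/|1 − conj(α)·w|² ≥ (1 − |z|²)/|1 − conj(α)·z|² then (1 − |f(w)|²)/|1 − conj(α)·f(w)|² ≥ (1 − |z|²)/|1 − conj(α)·z|²; in particular (1 − |f(z)|²)/|1 − conj(α)·f(z)|² ≥ (1 − |z|²)/|1 − conj(α)·z|² for every z ∈ 𝔻. -/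
open Complex Metric

local notation "cabs" => (norm : ℂ → ℝ)

section DWAux

open Set Filter Topology

lemma dw_identity (a b : ℂ) :
    cabs (1 - (starRingEnd ℂ) b * a) ^ 2 - cabs (a - b) ^ 2
      = (1 - cabs a ^ 2) * (1 - cabs b ^ 2) := by
  simp only [Complex.sq_norm, Complex.normSq_apply, Complex.sub_re, Complex.sub_im,
    Complex.mul_re, Complex.mul_im, Complex.one_re, Complex.one_im, Complex.conj_re,
    Complex.conj_im]
  ring

lemma dw_denom_pos {a b : ℂ} (ha : cabs a < 1) (hb : cabs b ≤ 1) :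
    0 < cabs (1 - (starRingEnd ℂ) b * a) := by
  have h : cabs ((starRingEnd ℂ) b * a) < 1 := by
    rw [norm_mul, Complex.norm_conj]
    calc cabs b * cabs a ≤ 1 * cabs a :=
          mul_le_mul_of_nonneg_right hb (norm_nonneg a)
      _ < 1 := by simpa using ha
  have h2 := norm_sub_norm_le (1 : ℂ) ((starRingEnd ℂ) b * a)
  simp only [norm_one] at h2
  linarith

lemma dw_denom_ne {a b : ℂ} (ha : cabs a < 1) (hb : cabs b ≤ 1) :
    (1 : ℂ) - (starRingEnd ℂ) b * a ≠ 0 := by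
  intro h
  have := dw_denom_pos ha hb
  rw [h] at this; simp at this

/-- Möbius involution of the unit disk. -/
noncomputable def dwMob (b w : ℂ) : ℂ := (b - w) / (1 - (starRingEnd ℂ) b * w)

lemma dwMob_mem {b w : ℂ} (hb : cabs b < 1) (hw : cabs w < 1) :
    cabs (dwMob b w) < 1 := by
  have hd := dw_denom_pos hw hb.le
  rw [dwMob, norm_div, div_lt_one hd]
  have key := dw_identity w b
  have h1 : 0 < (1 - cabs w ^ 2) * (1 - cabs b ^ 2) := by
    have : cabs w ^ 2 < 1 := by nlinarith [norm_nonneg w]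
    have : cabs b ^ 2 < 1 := by nlinarith [norm_nonneg b]
    nlinarith [norm_nonneg w, norm_nonneg b, sq_nonneg (cabs w), hw, hb]
  have h2 : cabs (w - b) ^ 2 < cabs (1 - (starRingEnd ℂ) b * w) ^ 2 := by linarith
  have : cabs (w - b) < cabs (1 - (starRingEnd ℂ) b * w) := by
    nlinarith [norm_nonneg (w - b), norm_nonneg (1 - (starRingEnd ℂ) b * w)]
  rwa [norm_sub_rev]

lemma dwMob_invol {b w : ℂ} (hb : cabs b < 1) (hw : cabs w < 1) :
    dwMob b (dwMob b w) = w := by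
  have h1 : (1 : ℂ) - (starRingEnd ℂ) b * w ≠ 0 := dw_denom_ne hw hb.le
  have h2 : (1 : ℂ) - (starRingEnd ℂ) b * b ≠ 0 := dw_denom_ne hb hb.le
  rw [dwMob, dwMob]
  rw [show b - (b - w) / (1 - (starRingEnd ℂ) b * w)
      = (w * (1 - (starRingEnd ℂ) b * b)) / (1 - (starRingEnd ℂ) b * w) by
    rw [eq_div_iff h1, sub_mul, div_mul_cancel₀ _ h1]; ring]
  rw [show 1 - (starRingEnd ℂ) b * ((b - w) / (1 - (starRingEnd ℂ) b * w))
      = (1 - (starRingEnd ℂ) b * b) / (1 - (starRingEnd ℂ) b * w) by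
    field_simp; ring]
  have h1' : (1:ℂ) - w * (starRingEnd ℂ) b ≠ 0 := by rwa [mul_comm] at h1
  have h2' : (1:ℂ) - b * (starRingEnd ℂ) b ≠ 0 := by rwa [mul_comm] at h2
  field_simp

lemma dwMob_diff {b : ℂ} (hb : cabs b < 1) :
    DifferentiableOn ℂ (dwMob b) (Metric.ball 0 1) := by
  apply DifferentiableOn.div
  · exact (differentiable_const b).differentiableOn.sub differentiable_id.differentiableOn
  · exact (differentiable_const 1).differentiableOn.sub
      ((differentiable_const _).mul differentiable_id).differentiableOn
  · intro x hx
    exact dw_denom_ne (mem_ball_zero_iff.mp hx) hb.le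

/-- The Schwarz–Pick inequality, in "cross-multiplied" form. -/
lemma schwarz_pick {g : ℂ → ℂ} (hg : DifferentiableOn ℂ g (ball 0 1))
    (hm : MapsTo g (ball (0:ℂ) 1) (ball (0:ℂ) 1)) {a b : ℂ}
    (ha : cabs a < 1) (hb : cabs b < 1) :
    cabs (g a - g b) * cabs (1 - (starRingEnd ℂ) b * a)
      ≤ cabs (a - b) * cabs (1 - (starRingEnd ℂ) (g b) * (g a)) := by
  have hga : cabs (g a) < 1 := by
    simpa [mem_ball_zero_iff] using hm (mem_ball_zero_iff.mpr ha)
  have hgb : cabs (g b) < 1 := by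
    simpa [mem_ball_zero_iff] using hm (mem_ball_zero_iff.mpr hb)
  set h : ℂ → ℂ := dwMob (g b) ∘ g ∘ dwMob b with hh
  have mapsMob : ∀ c : ℂ, cabs c < 1 →
      MapsTo (dwMob c) (ball (0:ℂ) 1) (ball (0:ℂ) 1) := by
    intro c hc w hw
    exact mem_ball_zero_iff.mpr (dwMob_mem hc (mem_ball_zero_iff.mp hw))
  have hdiff : DifferentiableOn ℂ h (ball 0 1) := by
    exact (dwMob_diff hgb).comp (hg.comp (dwMob_diff hb) (mapsMob b hb))
      (hm.comp (mapsMob b hb))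
  have hmaps : MapsTo h (ball (0:ℂ) 1) (ball (0:ℂ) 1) :=
    (mapsMob _ hgb).comp (hm.comp (mapsMob b hb))
  have h0 : h 0 = 0 := by
    have : dwMob b 0 = b := by rw [dwMob]; simp
    simp [hh, Function.comp, this, dwMob]
  have key := Complex.norm_le_norm_of_mapsTo_ball hdiff (hmaps.mono_right ball_subset_closedBall) h0
    (z := dwMob b a) (dwMob_mem hb ha)
  have hinv : h (dwMob b a) = dwMob (g b) (g a) := by
    simp [hh, Function.comp, dwMob_invol hb ha]
  rw [hinv, dwMob, dwMob, norm_div, norm_div] at key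
  have d1 := dw_denom_pos hga hgb.le
  have d2 := dw_denom_pos ha hb.le
  rw [div_le_div_iff₀ d1 d2] at key
  calc cabs (g a - g b) * cabs (1 - (starRingEnd ℂ) b * a)
      = cabs (g b - g a) * cabs (1 - (starRingEnd ℂ) b * a) := by
        rw [norm_sub_rev]
    _ ≤ cabs (b - a) * cabs (1 - (starRingEnd ℂ) (g b) * g a) := key
    _ = cabs (a - b) * cabs (1 - (starRingEnd ℂ) (g b) * g a) := by
        rw [norm_sub_rev b a]

/-- The Schwarz–Pick inequality, in "horocycle product" form. -/
lemma schwarz_pick_prod {g : ℂ → ℂ} (hg : DifferentiableOn ℂ g (ball 0 1))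
    (hm : MapsTo g (ball (0:ℂ) 1) (ball (0:ℂ) 1)) {a b : ℂ}
    (ha : cabs a < 1) (hb : cabs b < 1) :
    (1 - cabs a ^ 2) * (1 - cabs b ^ 2)
        * cabs (1 - (starRingEnd ℂ) (g b) * (g a)) ^ 2
      ≤ (1 - cabs (g a) ^ 2) * (1 - cabs (g b) ^ 2)
        * cabs (1 - (starRingEnd ℂ) b * a) ^ 2 := by
  have sp := schwarz_pick hg hm ha hb
  have sp2 : (cabs (g a - g b) * cabs (1 - (starRingEnd ℂ) b * a)) ^ 2
      ≤ (cabs (a - b) * cabs (1 - (starRingEnd ℂ) (g b) * (g a))) ^ 2 :=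
    pow_le_pow_left₀ (by positivity) sp 2
  have i1 := dw_identity a b
  have i2 := dw_identity (g a) (g b)
  nlinarith [sp2, mul_pow (cabs (g a - g b)) (cabs (1 - (starRingEnd ℂ) b * a)) 2,
    mul_pow (cabs (a - b)) (cabs (1 - (starRingEnd ℂ) (g b) * (g a))) 2]

lemma dw_rid (r : ℝ) (t : ℂ) :
    cabs (1 - (r:ℂ) * (r:ℂ) * t) ^ 2 - r * r * cabs (1 - t) ^ 2
      = (1 - r * r) * (1 - r * r * cabs t ^ 2) := by
  simp only [Complex.sq_norm, Complex.normSq_apply, Complex.sub_re, Complex.sub_im,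
    Complex.mul_re, Complex.mul_im, Complex.one_re, Complex.one_im, Complex.ofReal_re,
    Complex.ofReal_im]
  ring

lemma dw_contract {r : ℝ} (hr0 : 0 < r) (hr1 : r < 1) {t : ℂ} (ht : cabs t ≤ 1) :
    r * cabs (1 - t)
      ≤ Real.sqrt (1 - (1 - r * r) ^ 2 / 4) * cabs (1 - (r:ℂ) * (r:ℂ) * t) := by
  set K : ℝ := 1 - (1 - r * r) ^ 2 / 4 with hK
  have hrr : r * r < 1 := by nlinarith
  have hsq : (1 - r * r) ^ 2 ≤ 1 := by nlinarith [sq_nonneg r]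
  have hK0 : 0 ≤ K := by simp only [hK]; linarith
  set B : ℝ := cabs (1 - (r:ℂ) * (r:ℂ) * t) with hB
  have hB0 : 0 ≤ B := norm_nonneg _
  have hB2 : B ≤ 2 := by
    have h1 : cabs ((r:ℂ) * (r:ℂ) * t) ≤ 1 := by
      rw [norm_mul, norm_mul, Complex.norm_real, Real.norm_eq_abs, abs_of_pos hr0]
      nlinarith [norm_nonneg t]
    have h2 := norm_sub_le (1:ℂ) ((r:ℂ) * (r:ℂ) * t)
    simp only [norm_one] at h2
    linarith
  have ht0 : 0 ≤ cabs t := norm_nonneg t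
  have key : (r * cabs (1 - t)) ^ 2 ≤ K * B ^ 2 := by
    have hid := dw_rid r t
    have h2 : cabs t ^ 2 ≤ 1 := by nlinarith
    have hB4 : B ^ 2 ≤ 4 := by nlinarith
    have h5 : (1 - r * r) * (1 - r * r) ≤ (1 - r * r) * (1 - r * r * cabs t ^ 2) :=
      mul_le_mul_of_nonneg_left (by nlinarith) (by linarith)
    have h6 : (1 - r * r) ^ 2 / 4 * B ^ 2 ≤ (1 - r * r) ^ 2 / 4 * 4 :=
      mul_le_mul_of_nonneg_left hB4 (by positivity)
    simp only [hK]
    nlinarith [h5, h6, hid]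
  calc r * cabs (1 - t) = Real.sqrt ((r * cabs (1 - t)) ^ 2) := by
        rw [Real.sqrt_sq (by positivity)]
    _ ≤ Real.sqrt (K * B ^ 2) := Real.sqrt_le_sqrt key
    _ = Real.sqrt K * B := by
        rw [Real.sqrt_mul hK0, Real.sqrt_sq hB0]

/-- Contraction property of `z ↦ r * f z` in the pseudo-hyperbolic "cross" form. -/
lemma dw_g_contract {f : ℂ → ℂ} (hf : DifferentiableOn ℂ f (ball (0 : ℂ) 1))
    (hmap : ∀ z ∈ ball (0 : ℂ) 1, cabs (f z) < 1)
    {r : ℝ} (hr0 : 0 < r) (hr1 : r < 1) {a b : ℂ}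
    (ha : cabs a < 1) (hb : cabs b < 1) :
    cabs ((r:ℂ) * f a - (r:ℂ) * f b) * cabs (1 - (starRingEnd ℂ) b * a)
      ≤ Real.sqrt (1 - (1 - r * r) ^ 2 / 4) *
        (cabs (a - b) *
          cabs (1 - (starRingEnd ℂ) ((r:ℂ) * f b) * ((r:ℂ) * f a))) := by
  have hm : MapsTo f (ball (0:ℂ) 1) (ball (0:ℂ) 1) := fun z hz =>
    mem_ball_zero_iff.mpr (hmap z hz)
  have hfa : cabs (f a) < 1 := hmap a (mem_ball_zero_iff.mpr ha)
  have hfb : cabs (f b) < 1 := hmap b (mem_ball_zero_iff.mpr hb)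
  have sp := schwarz_pick hf hm ha hb
  have habs : cabs ((r:ℂ) * f a - (r:ℂ) * f b) = r * cabs (f a - f b) := by
    rw [← mul_sub, norm_mul, Complex.norm_real, Real.norm_eq_abs, abs_of_pos hr0]
  have ht : cabs ((starRingEnd ℂ) (f b) * f a) ≤ 1 := by
    rw [norm_mul, Complex.norm_conj]
    nlinarith [norm_nonneg (f a), norm_nonneg (f b)]
  have hc := dw_contract hr0 hr1 ht
  have hconj : (1 : ℂ) - (starRingEnd ℂ) ((r:ℂ) * f b) * ((r:ℂ) * f a)
      = 1 - (r:ℂ) * (r:ℂ) * ((starRingEnd ℂ) (f b) * f a) := by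
    rw [map_mul, Complex.conj_ofReal]; ring
  rw [hconj, habs]
  have h1 : r * cabs (f a - f b) * cabs (1 - (starRingEnd ℂ) b * a)
      ≤ r * (cabs (a - b) * cabs (1 - (starRingEnd ℂ) (f b) * f a)) := by
    rw [mul_assoc]
    exact mul_le_mul_of_nonneg_left sp hr0.le
  calc r * cabs (f a - f b) * cabs (1 - (starRingEnd ℂ) b * a)
      ≤ r * (cabs (a - b) * cabs (1 - (starRingEnd ℂ) (f b) * f a)) := h1
    _ = cabs (a - b) * (r * cabs (1 - (starRingEnd ℂ) (f b) * f a)) := by ring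
    _ ≤ cabs (a - b) * (Real.sqrt (1 - (1 - r * r) ^ 2 / 4) *
          cabs (1 - (r:ℂ) * (r:ℂ) * ((starRingEnd ℂ) (f b) * f a))) :=
        mul_le_mul_of_nonneg_left hc (norm_nonneg _)
    _ = Real.sqrt (1 - (1 - r * r) ^ 2 / 4) * (cabs (a - b) *
          cabs (1 - (r:ℂ) * (r:ℂ) * ((starRingEnd ℂ) (f b) * f a))) := by ring

/-- Existence of a fixed point for `z ↦ r * f z`, `0 < r < 1`. -/
lemma dw_fixed {f : ℂ → ℂ} (hf : DifferentiableOn ℂ f (ball (0 : ℂ) 1))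
    (hmap : ∀ z ∈ ball (0 : ℂ) 1, cabs (f z) < 1)
    {r : ℝ} (hr0 : 0 < r) (hr1 : r < 1) :
    ∃ w : ℂ, cabs w ≤ r ∧ (r:ℂ) * f w = w := by
  set c : ℝ := Real.sqrt (1 - (1 - r * r) ^ 2 / 4) with hc
  have hc0 : 0 ≤ c := Real.sqrt_nonneg _
  have hrr0 : 0 < r * r := mul_pos hr0 hr0
  have hrr1 : r * r < 1 := by nlinarith
  have hK0 : 0 ≤ 1 - (1 - r * r) ^ 2 / 4 := by nlinarith [mul_lt_mul_of_pos_left hrr1 hrr0]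
  have hc1 : c < 1 := by
    have hK1 : 1 - (1 - r * r) ^ 2 / 4 < 1 := by
      have := pow_pos (show (0:ℝ) < 1 - r * r by linarith) 2
      linarith
    have := Real.sqrt_lt_sqrt hK0 hK1
    rwa [Real.sqrt_one] at this
  set z : ℕ → ℂ := fun n => Nat.rec (0:ℂ) (fun _ w => (r:ℂ) * f w) n with hzdef
  have hzs : ∀ n, z (n+1) = (r:ℂ) * f (z n) := fun n => rfl
  have hzr : ∀ n, cabs (z n) ≤ r := by
    intro n
    induction n with
    | zero =>
      have h0 : z 0 = 0 := rfl
      rw [h0]; simpa using hr0.le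
    | succ n ih =>
      rw [hzs, norm_mul, Complex.norm_real, Real.norm_eq_abs, abs_of_pos hr0]
      have hfz : cabs (f (z n)) < 1 :=
        hmap _ (mem_ball_zero_iff.mpr (lt_of_le_of_lt ih hr1))
      nlinarith [norm_nonneg (f (z n))]
  have hzb : ∀ n, cabs (z n) < 1 := fun n => lt_of_le_of_lt (hzr n) hr1
  set D : ℕ → ℝ := fun n =>
    cabs (z (n+1) - z n) / cabs (1 - (starRingEnd ℂ) (z n) * z (n+1)) with hD
  have hDpos : ∀ n, 0 < cabs (1 - (starRingEnd ℂ) (z n) * z (n+1)) :=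
    fun n => dw_denom_pos (hzb (n+1)) (hzb n).le
  have hDnn : ∀ n, 0 ≤ D n := fun n => div_nonneg (norm_nonneg _) (norm_nonneg _)
  have hstep : ∀ n, D (n+1) ≤ c * D n := by
    intro n
    have hg := dw_g_contract hf hmap hr0 hr1 (hzb (n+1)) (hzb n)
    rw [show (r:ℂ) * f (z (n+1)) = z (n+2) from (hzs (n+1)).symm,
       show (r:ℂ) * f (z n) = z (n+1) from (hzs n).symm] at hg
    have hDval : ∀ m, D m = cabs (z (m+1) - z m) /
        cabs (1 - (starRingEnd ℂ) (z m) * z (m+1)) := fun m => rfl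
    simp only [hDval]
    rw [mul_div_assoc' c _ _, div_le_div_iff₀ (hDpos (n+1)) (hDpos n)]
    exact hg.trans (le_of_eq (by ring))
  have hDgeom : ∀ n, D n ≤ c ^ n * D 0 := by
    intro n
    induction n with
    | zero => simp
    | succ n ih =>
      calc D (n+1) ≤ c * D n := hstep n
        _ ≤ c * (c ^ n * D 0) := mul_le_mul_of_nonneg_left ih hc0
        _ = c ^ (n+1) * D 0 := by ring
  have hden2 : ∀ n, cabs (1 - (starRingEnd ℂ) (z n) * z (n+1)) ≤ 2 := by
    intro n
    have h1 : cabs ((starRingEnd ℂ) (z n) * z (n+1)) ≤ 1 := by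
      rw [norm_mul, Complex.norm_conj]
      nlinarith [norm_nonneg (z n), norm_nonneg (z (n+1)), hzb n, hzb (n+1)]
    have h2 := norm_sub_le (1:ℂ) ((starRingEnd ℂ) (z n) * z (n+1))
    simp only [norm_one] at h2
    linarith
  have hdist : ∀ n, dist (z n) (z (n+1)) ≤ (2 * D 0) * c ^ n := by
    intro n
    have hnum : cabs (z (n+1) - z n)
        = D n * cabs (1 - (starRingEnd ℂ) (z n) * z (n+1)) :=
      (div_mul_cancel₀ _ (hDpos n).ne').symm
    have hd : dist (z n) (z (n+1)) = cabs (z (n+1) - z n) := by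
      rw [dist_comm, Complex.dist_eq]
    rw [hd, hnum]
    calc D n * cabs (1 - (starRingEnd ℂ) (z n) * z (n+1))
        ≤ D n * 2 := mul_le_mul_of_nonneg_left (hden2 n) (hDnn n)
      _ ≤ (c ^ n * D 0) * 2 := by
          have := hDgeom n
          nlinarith
      _ = (2 * D 0) * c ^ n := by ring
  have hcauchy : CauchySeq z := cauchySeq_of_le_geometric c (2 * D 0) hc1 hdist
  obtain ⟨L, hL⟩ := cauchySeq_tendsto_of_complete hcauchy
  have hLr : cabs L ≤ r := by
    have habs : Tendsto (fun n => cabs (z n)) atTop (𝓝 (cabs L)) :=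
      (continuous_norm.continuousAt.tendsto).comp hL
    exact le_of_tendsto habs (Filter.Eventually.of_forall hzr)
  have hLb : L ∈ ball (0:ℂ) 1 := mem_ball_zero_iff.mpr (lt_of_le_of_lt hLr hr1)
  have hcontf : ContinuousAt f L := hf.continuousOn.continuousAt (isOpen_ball.mem_nhds hLb)
  have h1 : Tendsto (fun n => z (n+1)) atTop (𝓝 L) := hL.comp (tendsto_add_atTop_nat 1)
  have h2 : Tendsto (fun n => (r:ℂ) * f (z n)) atTop (𝓝 ((r:ℂ) * f L)) :=
    (hcontf.tendsto.comp hL).const_mul _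
  have heq : (fun n => z (n+1)) = fun n => (r:ℂ) * f (z n) := funext hzs
  rw [heq] at h1
  exact ⟨L, hLr, tendsto_nhds_unique h2 h1⟩

end DWAux

open Set Filter Topology

/-- Denjoy–Wolff: a fixed-point-free holomorphic self-map of the unit disk contracts
every horocycle at some boundary point `α`. -/
theorem denjoy_wolff
    (f : ℂ → ℂ) (hf : DifferentiableOn ℂ f (ball (0 : ℂ) 1))
    (hmap : ∀ z ∈ ball (0 : ℂ) 1, ‖f z‖ < 1)
    (hnofix : ∀ z ∈ ball (0 : ℂ) 1, f z ≠ z) :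
    ∃ α : ℂ, ‖α‖ = 1 ∧
      (∀ z ∈ ball (0 : ℂ) 1, ∀ w ∈ ball (0 : ℂ) 1,
        (1 - ‖w‖ ^ 2) / ‖1 - (starRingEnd ℂ) α * w‖ ^ 2 ≥
            (1 - ‖z‖ ^ 2) / ‖1 - (starRingEnd ℂ) α * z‖ ^ 2 →
          (1 - ‖f w‖ ^ 2) / ‖1 - (starRingEnd ℂ) α * f w‖ ^ 2 ≥
            (1 - ‖z‖ ^ 2) / ‖1 - (starRingEnd ℂ) α * z‖ ^ 2) ∧
      (∀ z ∈ ball (0 : ℂ) 1,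
        (1 - ‖f z‖ ^ 2) / ‖1 - (starRingEnd ℂ) α * f z‖ ^ 2 ≥
          (1 - ‖z‖ ^ 2) / ‖1 - (starRingEnd ℂ) α * z‖ ^ 2) := by
  classical
  set r : ℕ → ℝ := fun n => 1 - 1 / ((n : ℝ) + 2) with hrdef
  have hn2 : ∀ n : ℕ, (0:ℝ) < (n:ℝ) + 2 := fun n => by positivity
  have hr1 : ∀ n, r n < 1 := by
    intro n
    have : 0 < 1 / ((n:ℝ) + 2) := by positivity
    simp only [hrdef]; linarith
  have hr0 : ∀ n, 0 < r n := by
    intro n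
    have h2 : (1:ℝ) / ((n:ℝ) + 2) ≤ 1 / 2 :=
      one_div_le_one_div_of_le (by norm_num) (by
        have : (0:ℝ) ≤ (n:ℝ) := Nat.cast_nonneg n
        linarith)
    simp only [hrdef]; linarith
  have hrlim : Tendsto r atTop (𝓝 1) := by
    have h2 : Tendsto (fun n : ℕ => ((n:ℝ) + 2)) atTop atTop :=
      tendsto_atTop_add_const_right _ 2 tendsto_natCast_atTop_atTop
    have h3 : Tendsto (fun n : ℕ => ((n:ℝ) + 2)⁻¹) atTop (𝓝 0) := h2.inv_tendsto_atTop
    have h4 : Tendsto (fun _ : ℕ => (1:ℝ)) atTop (𝓝 1) := tendsto_const_nhds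
    have h5 := h4.sub h3
    simpa [hrdef, one_div] using h5
  choose w hw1 hw2 using fun n => dw_fixed hf hmap (hr0 n) (hr1 n)
  have hwb : ∀ n, cabs (w n) < 1 := fun n => lt_of_le_of_lt (hw1 n) (hr1 n)
  have hwc : ∀ n, w n ∈ closedBall (0:ℂ) 1 :=
    fun n => mem_closedBall_zero_iff.mpr (by
      exact ((hw1 n).trans (hr1 n).le))
  obtain ⟨α, hαmem, φ, hφ, hwφ⟩ := (isCompact_closedBall (0:ℂ) 1).tendsto_subseq hwc
  have hα1 : cabs α ≤ 1 := by
    have := mem_closedBall_zero_iff.mp hαmem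
    exact this
  have hrφ : Tendsto (fun n => r (φ n)) atTop (𝓝 1) := hrlim.comp hφ.tendsto_atTop
  have hrφC : Tendsto (fun n => ((r (φ n) : ℝ) : ℂ)) atTop (𝓝 1) := by
    have := (Complex.continuous_ofReal.tendsto 1).comp hrφ
    simpa [Function.comp_def] using this
  have hconjφ : Tendsto (fun n => (starRingEnd ℂ) (w (φ n))) atTop
      (𝓝 ((starRingEnd ℂ) α)) := by
    have h := (Complex.continuous_conj.tendsto α).comp hwφ
    exact h
  have hαabs : cabs α = 1 := by
    by_contra hne
    have hαb : α ∈ ball (0:ℂ) 1 := mem_ball_zero_iff.mpr (lt_of_le_of_ne hα1 hne)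
    have hcont : ContinuousAt f α := hf.continuousOn.continuousAt (isOpen_ball.mem_nhds hαb)
    have h2 : Tendsto (fun n => ((r (φ n) : ℝ) : ℂ) * f (w (φ n))) atTop
        (𝓝 ((1:ℂ) * f α)) := hrφC.mul (hcont.tendsto.comp hwφ)
    have heq : (fun n => ((r (φ n) : ℝ) : ℂ) * f (w (φ n))) = fun n => w (φ n) :=
      funext fun n => hw2 (φ n)
    rw [heq] at h2
    have hfix : (1:ℂ) * f α = α := tendsto_nhds_unique h2 hwφ
    exact hnofix α hαb (by simpa using hfix)
  have key : ∀ z ∈ ball (0:ℂ) 1,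
      (1 - cabs (f z) ^ 2) / cabs (1 - (starRingEnd ℂ) α * f z) ^ 2 ≥
        (1 - cabs z ^ 2) / cabs (1 - (starRingEnd ℂ) α * z) ^ 2 := by
    intro z hz
    have hzb : cabs z < 1 := mem_ball_zero_iff.mp hz
    have hfz : cabs (f z) < 1 := hmap z hz
    have hn : ∀ n, (1 - cabs z ^ 2) *
        cabs (1 - (starRingEnd ℂ) (w (φ n)) * (((r (φ n):ℝ):ℂ) * f z)) ^ 2
        ≤ (1 - cabs (((r (φ n):ℝ):ℂ) * f z) ^ 2) *
          cabs (1 - (starRingEnd ℂ) (w (φ n)) * z) ^ 2 := by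
      intro n
      have hρ0 := hr0 (φ n); have hρ1 := hr1 (φ n)
      set g : ℂ → ℂ := fun u => ((r (φ n):ℝ):ℂ) * f u with hg
      have hgd : DifferentiableOn ℂ g (ball 0 1) := hf.const_mul _
      have hgm : MapsTo g (ball (0:ℂ) 1) (ball (0:ℂ) 1) := by
        intro u hu
        rw [mem_ball_zero_iff]
        have : cabs (g u) = r (φ n) * cabs (f u) := by
          rw [hg, norm_mul, Complex.norm_real, Real.norm_eq_abs, abs_of_pos hρ0]
        rw [this]
        nlinarith [hmap u hu, norm_nonneg (f u)]
      have hsp := schwarz_pick_prod hgd hgm hzb (hwb (φ n))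
      have hfix : g (w (φ n)) = w (φ n) := hw2 (φ n)
      rw [hfix] at hsp
      have hwpos : 0 < 1 - cabs (w (φ n)) ^ 2 := by
        nlinarith [norm_nonneg (w (φ n)), hwb (φ n)]
      have h' : ((1 - cabs z ^ 2) *
            cabs (1 - (starRingEnd ℂ) (w (φ n)) * g z) ^ 2) *
            (1 - cabs (w (φ n)) ^ 2)
          ≤ ((1 - cabs (g z) ^ 2) *
            cabs (1 - (starRingEnd ℂ) (w (φ n)) * z) ^ 2) *
            (1 - cabs (w (φ n)) ^ 2) :=
        (le_of_eq (by ring)).trans (hsp.trans (le_of_eq (by ring)))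
      exact le_of_mul_le_mul_right h' hwpos
    have hlimL : Tendsto (fun n => (1 - cabs z ^ 2) *
        cabs (1 - (starRingEnd ℂ) (w (φ n)) * (((r (φ n):ℝ):ℂ) * f z)) ^ 2) atTop
        (𝓝 ((1 - cabs z ^ 2) *
          cabs (1 - (starRingEnd ℂ) α * f z) ^ 2)) := by
      apply Tendsto.const_mul
      have hin : Tendsto (fun n => (1 : ℂ) - (starRingEnd ℂ) (w (φ n)) *
          (((r (φ n):ℝ):ℂ) * f z)) atTop (𝓝 (1 - (starRingEnd ℂ) α * ((1:ℂ) * f z))) :=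
        tendsto_const_nhds.sub (hconjφ.mul (hrφC.mul tendsto_const_nhds))
      rw [one_mul] at hin
      exact ((continuous_norm.tendsto _).comp hin).pow 2
    have hlimR : Tendsto (fun n => (1 - cabs (((r (φ n):ℝ):ℂ) * f z) ^ 2) *
        cabs (1 - (starRingEnd ℂ) (w (φ n)) * z) ^ 2) atTop
        (𝓝 ((1 - cabs (f z) ^ 2) *
          cabs (1 - (starRingEnd ℂ) α * z) ^ 2)) := by
      have t1 : Tendsto (fun n => ((r (φ n):ℝ):ℂ) * f z) atTop (𝓝 ((1:ℂ) * f z)) :=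
        hrφC.mul tendsto_const_nhds
      rw [one_mul] at t1
      have t2 : Tendsto (fun n => 1 - cabs (((r (φ n):ℝ):ℂ) * f z) ^ 2) atTop
          (𝓝 (1 - cabs (f z) ^ 2)) :=
        tendsto_const_nhds.sub (((continuous_norm.tendsto _).comp t1).pow 2)
      have t3 : Tendsto (fun n => cabs (1 - (starRingEnd ℂ) (w (φ n)) * z) ^ 2) atTop
          (𝓝 (cabs (1 - (starRingEnd ℂ) α * z) ^ 2)) := by
        have hin : Tendsto (fun n => (1:ℂ) - (starRingEnd ℂ) (w (φ n)) * z) atTop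
            (𝓝 (1 - (starRingEnd ℂ) α * z)) :=
          tendsto_const_nhds.sub (hconjφ.mul tendsto_const_nhds)
        exact ((continuous_norm.tendsto _).comp hin).pow 2
      exact t2.mul t3
    have hle := le_of_tendsto_of_tendsto' hlimL hlimR hn
    have d1 : 0 < cabs (1 - (starRingEnd ℂ) α * f z) := dw_denom_pos hfz hα1
    have d2 : 0 < cabs (1 - (starRingEnd ℂ) α * z) := dw_denom_pos hzb hα1
    rw [ge_iff_le, div_le_div_iff₀ (pow_pos d2 2) (pow_pos d1 2)]
    exact le_of_eq (by ring) |>.trans (hle.trans (le_of_eq (by ring)))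
  exact ⟨α, hαabs, fun z hz ww hww h => ge_trans (key ww hww) h, key⟩
end

section
/- (Burns–Krantz) Let φ be holomorphic on the open unit disk 𝔻 with |φ(z)| < 1 for all z ∈ 𝔻, and suppose there exists a constant C > 0 such that |φ(z) − z| ≤ C·|z − 1|⁴ for all z ∈ 𝔻. Then φ(z) = z for every z ∈ 𝔻. -/
open Complex Metric

noncomputable def HP : Set ℂ := {w : ℂ | 0 < w.re}

lemma HP_def : ∀ w : ℂ, w ∈ HP ↔ 0 < w.re := fun _ => Iff.rfl

lemma isOpen_HP : IsOpen HP := isOpen_lt continuous_const Complex.continuous_re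

lemma preconnected_HP : IsPreconnected HP :=
  (convex_halfSpace_re_gt 0).isPreconnected

lemma abs_sub_lt_abs_add_conj {w b : ℂ} (hw : 0 < w.re) (hb : 0 < b.re) :
    ‖w - b‖ < ‖w + (starRingEnd ℂ) b‖ := by
  rw [Complex.norm_def, Complex.norm_def]
  apply Real.sqrt_lt_sqrt (Complex.normSq_nonneg _)
  simp only [Complex.normSq_apply, Complex.sub_re, Complex.sub_im, Complex.add_re,
    Complex.add_im, Complex.conj_re, Complex.conj_im]
  nlinarith

lemma add_conj_ne_zero {w b : ℂ} (hw : 0 < w.re) (hb : 0 < b.re) :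
    w + (starRingEnd ℂ) b ≠ 0 := by
  intro h
  have : (w + (starRingEnd ℂ) b).re = 0 := by rw [h]; simp
  simp only [Complex.add_re, Complex.conj_re] at this
  linarith

lemma re_div_pos_iff {u v : ℂ} (hv : v ≠ 0) : 0 < (u / v).re ↔ 0 < (u * (starRingEnd ℂ) v).re := by
  rw [div_eq_mul_inv, Complex.inv_def, ← mul_assoc]
  rw [mul_comm (u * (starRingEnd ℂ) v) _, Complex.re_ofReal_mul]
  constructor
  · intro h
    by_contra hc
    push_neg at hc
    have h2 : (0:ℝ) < (Complex.normSq v)⁻¹ := inv_pos.2 (Complex.normSq_pos.2 hv)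
    nlinarith
  · intro h
    have h2 : (0:ℝ) < (Complex.normSq v)⁻¹ := inv_pos.2 (Complex.normSq_pos.2 hv)
    positivity

lemma moebius_mem_HP {a ζ : ℂ} (ha : 0 < a.re) (hζ : ‖ζ‖ < 1) :
    0 < ((a + (starRingEnd ℂ) a * ζ) / (1 - ζ)).re := by
  have hζ' : Complex.normSq ζ < 1 := by
    rw [← Complex.sq_norm]; nlinarith [norm_nonneg ζ]
  have hv : (1 : ℂ) - ζ ≠ 0 := by
    intro h
    have : ζ = 1 := by linear_combination -h
    rw [this] at hζ; simp at hζ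
  rw [re_div_pos_iff hv]
  simp only [Complex.mul_re, Complex.add_re, Complex.add_im, Complex.conj_re, Complex.conj_im,
    Complex.mul_im, Complex.sub_re, Complex.sub_im, Complex.one_re, Complex.one_im,
    Complex.normSq_apply] at *
  nlinarith

lemma schwarz_pick_HP {Q : ℂ → ℂ} (hQ : DifferentiableOn ℂ Q HP)
    (hm : ∀ w ∈ HP, Q w ∈ HP) {v w : ℂ} (hv : v ∈ HP) (hw : w ∈ HP) :
    ‖Q w - Q v‖ * ‖w + (starRingEnd ℂ) v‖ ≤
    ‖w - v‖ * ‖Q w + (starRingEnd ℂ) (Q v)‖ := by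
  have hvre : 0 < v.re := hv
  have hwre : 0 < w.re := hw
  set b := Q v with hbdef
  have hb : 0 < b.re := hm v hv
  set m : ℂ → ℂ := fun ζ => (v + (starRingEnd ℂ) v * ζ) / (1 - ζ) with hmdef
  set g : ℂ → ℂ := fun ζ => (Q (m ζ) - b) / (Q (m ζ) + (starRingEnd ℂ) b) with hgdef
  have hball : ∀ ζ : ℂ, ζ ∈ ball (0:ℂ) 1 → ‖ζ‖ < 1 := by
    intro ζ hζ; rwa [mem_ball_zero_iff] at hζ
  have hone : ∀ ζ : ℂ, ‖ζ‖ < 1 → (1:ℂ) - ζ ≠ 0 := by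
    intro ζ hζ h
    have : ζ = 1 := by linear_combination -h
    rw [this] at hζ; simp at hζ
  have hmmem : ∀ ζ ∈ ball (0:ℂ) 1, m ζ ∈ HP := by
    intro ζ hζ
    exact moebius_mem_HP hvre (hball ζ hζ)
  have hQm : ∀ ζ ∈ ball (0:ℂ) 1, 0 < (Q (m ζ)).re := fun ζ hζ => hm _ (hmmem ζ hζ)
  have hmdiff : DifferentiableOn ℂ m (ball (0:ℂ) 1) := by
    apply DifferentiableOn.div
    · exact (differentiable_const _).differentiableOn.add
        ((differentiable_const _).mul differentiable_id).differentiableOn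
    · exact (differentiable_const _).differentiableOn.sub differentiable_id.differentiableOn
    · intro ζ hζ; exact hone ζ (hball ζ hζ)
  have hQmdiff : DifferentiableOn ℂ (fun ζ => Q (m ζ)) (ball (0:ℂ) 1) :=
    hQ.comp hmdiff hmmem
  have hgdiff : DifferentiableOn ℂ g (ball (0:ℂ) 1) := by
    apply DifferentiableOn.div
    · exact hQmdiff.sub (differentiable_const _).differentiableOn
    · exact hQmdiff.add (differentiable_const _).differentiableOn
    · intro ζ hζ; exact add_conj_ne_zero (hQm ζ hζ) hb
  have hgmaps : Set.MapsTo g (ball (0:ℂ) 1) (ball (0:ℂ) 1) := by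
    intro ζ hζ
    rw [mem_ball_zero_iff]
    show ‖(Q (m ζ) - b) / (Q (m ζ) + (starRingEnd ℂ) b)‖ < 1
    rw [norm_div]
    rw [div_lt_one (by
      have := add_conj_ne_zero (hQm ζ hζ) hb
      simpa [norm_pos_iff] using this)]
    exact abs_sub_lt_abs_add_conj (hQm ζ hζ) hb
  have hg0 : g 0 = 0 := by
    have hm0 : m 0 = v := by simp [hmdef]
    simp [hgdef, hm0, ← hbdef]
  -- the point to evaluate at
  set ζ₀ : ℂ := (w - v) / (w + (starRingEnd ℂ) v) with hζ₀def
  have hden : ‖w + (starRingEnd ℂ) v‖ ≠ 0 := by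
    simpa using add_conj_ne_zero hwre hvre
  have hζ₀lt : ‖ζ₀‖ < 1 := by
    rw [hζ₀def, norm_div, div_lt_one (lt_of_le_of_ne (norm_nonneg _) (Ne.symm hden))]
    exact abs_sub_lt_abs_add_conj hwre hvre
  have hmζ₀ : m ζ₀ = w := by
    have h1 : (1:ℂ) - ζ₀ ≠ 0 := hone ζ₀ hζ₀lt
    have h2 : w + (starRingEnd ℂ) v ≠ 0 := add_conj_ne_zero hwre hvre
    have h3 : v + (starRingEnd ℂ) v ≠ 0 := by
      intro h
      have : (v + (starRingEnd ℂ) v).re = 0 := by rw [h]; simp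
      simp only [Complex.add_re, Complex.conj_re] at this
      linarith
    have key : v + (starRingEnd ℂ) v * ζ₀ = w * (1 - ζ₀) := by
      rw [hζ₀def]
      field_simp
      ring
    show (v + (starRingEnd ℂ) v * ζ₀) / (1 - ζ₀) = w
    rw [key, mul_div_assoc, div_self h1, mul_one]
  have := Complex.norm_le_norm_of_mapsTo_ball hgdiff (hgmaps.mono_right ball_subset_closedBall) hg0 hζ₀lt
  rw [hgdef] at this
  simp only [hmζ₀] at this
  rw [hζ₀def, norm_div, norm_div] at this
  have hd1 : 0 < ‖w + (starRingEnd ℂ) v‖ :=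
    lt_of_le_of_ne (norm_nonneg _) (Ne.symm hden)
  have hd2 : 0 < ‖Q w + (starRingEnd ℂ) b‖ := by
    have := add_conj_ne_zero (hm w hw) hb
    exact lt_of_le_of_ne (norm_nonneg _) (Ne.symm (by simpa using this))
  rw [div_le_div_iff₀ hd2 hd1] at this
  exact this

lemma sp_expand {A B w : ℂ} {t : ℝ}
    (h : ‖A - B‖ * ‖w + (t:ℂ)‖ ≤
      ‖w - (t:ℂ)‖ * ‖A + (starRingEnd ℂ) B‖) :
    t * w.re * (Complex.normSq A + Complex.normSq B) ≤
      (Complex.normSq w + t^2) * (A.re * B.re) + 2 * t * w.re * (A.im * B.im) := by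
  have h3 : Complex.normSq (A - B) * Complex.normSq (w + (t:ℂ)) ≤
      Complex.normSq (w - (t:ℂ)) * Complex.normSq (A + (starRingEnd ℂ) B) := by
    rw [← Complex.sq_norm, ← Complex.sq_norm, ← Complex.sq_norm, ← Complex.sq_norm,
      ← mul_pow, ← mul_pow]
    exact pow_le_pow_left₀ (by positivity) h 2
  simp only [Complex.normSq_apply, Complex.sub_re, Complex.sub_im, Complex.add_re,
    Complex.add_im, Complex.conj_re, Complex.conj_im, Complex.ofReal_re, Complex.ofReal_im] at h3 ⊢
  nlinarith [h3]

lemma const_of_re_eq_zero {R : ℂ → ℂ} (hR : DifferentiableOn ℂ R HP)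
    (hre : ∀ w ∈ HP, 0 ≤ (R w).re) {w₀ : ℂ} (hw₀ : w₀ ∈ HP) (h0 : (R w₀).re = 0) :
    ∀ w ∈ HP, R w = R w₀ := by
  have hne : ∀ w ∈ HP, R w + 1 ≠ 0 := by
    intro w hw h
    have : (R w + 1).re = 0 := by rw [h]; simp
    simp only [Complex.add_re, Complex.one_re] at this
    linarith [hre w hw]
  set g : ℂ → ℂ := fun w => (R w - 1) / (R w + 1) with hgdef
  have hgd : DifferentiableOn ℂ g HP :=
    (hR.sub (differentiable_const _).differentiableOn).div
      (hR.add (differentiable_const _).differentiableOn) hne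
  have hgle : ∀ w ∈ HP, ‖g w‖ ≤ ‖g w₀‖ := by
    have h1 : ‖g w₀‖ = 1 := by
      show ‖(R w₀ - 1) / (R w₀ + 1)‖ = 1
      rw [norm_div, div_eq_one_iff_eq (by simpa [norm_eq_zero] using hne w₀ hw₀)]
      show ‖_‖ = ‖_‖
      rw [Complex.norm_def, Complex.norm_def]
      congr 1
      simp only [Complex.normSq_apply, Complex.sub_re, Complex.sub_im, Complex.add_re,
        Complex.add_im, Complex.one_re, Complex.one_im]
      nlinarith [h0]
    intro w hw
    rw [h1]
    show ‖(R w - 1) / (R w + 1)‖ ≤ 1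
    rw [norm_div]
    apply div_le_one_of_le₀
    · show ‖_‖ ≤ ‖_‖
      rw [Complex.norm_def, Complex.norm_def]
      apply Real.sqrt_le_sqrt
      simp only [Complex.normSq_apply, Complex.sub_re, Complex.sub_im, Complex.add_re,
        Complex.add_im, Complex.one_re, Complex.one_im]
      nlinarith [hre w hw]
    · exact norm_nonneg _
  have heq : Set.EqOn g (Function.const ℂ (g w₀)) HP :=
    Complex.eqOn_of_isPreconnected_of_isMaxOn_norm preconnected_HP isOpen_HP hgd hw₀ hgle
  intro w hw
  have e1 : R w - 1 = g w₀ * (R w + 1) := by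
    have := heq hw
    simp only [Function.const_apply] at this
    rw [← this, hgdef]
    field_simp
    rw [mul_div_cancel_right₀ _ (hne w hw)]
  have e2 : R w₀ - 1 = g w₀ * (R w₀ + 1) := by
    rw [hgdef]
    field_simp
    rw [mul_div_cancel_right₀ _ (hne w₀ hw₀)]
  have hc1 : g w₀ ≠ 1 := by
    intro h
    rw [h, one_mul] at e2
    have : (1:ℂ) = -1 := by linear_combination -e2
    norm_num at this
  have : (1 - g w₀) * (R w - R w₀) = 0 := by linear_combination e1 - e2
  rcases mul_eq_zero.1 this with h | h
  · exact absurd (by linear_combination -h) hc1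
  · linear_combination h

set_option maxHeartbeats 2000000 in
/-- Burns–Krantz boundary rigidity theorem. -/
theorem burns_krantz
    (φ : ℂ → ℂ) (hφ : DifferentiableOn ℂ φ (ball (0 : ℂ) 1))
    (hmap : ∀ z ∈ ball (0 : ℂ) 1, ‖φ z‖ < 1)
    (C : ℝ) (hC : 0 < C)
    (hbound : ∀ z ∈ ball (0 : ℂ) 1, ‖φ z - z‖ ≤ C * ‖z - 1‖ ^ 4) :
    ∀ z ∈ ball (0 : ℂ) 1, φ z = z := by
  -- Cayley transform
  set c : ℂ → ℂ := fun w => (w - 1) / (w + 1) with hcdef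
  have hw1 : ∀ w ∈ HP, w + 1 ≠ 0 := by
    intro w hw
    have hw' : 0 < w.re := (HP_def w).1 hw
    have := add_conj_ne_zero hw' (by norm_num : (0:ℝ) < (1:ℂ).re)
    simpa using this
  have hcball : ∀ w ∈ HP, c w ∈ ball (0:ℂ) 1 := by
    intro w hw
    have hw' : 0 < w.re := (HP_def w).1 hw
    rw [mem_ball_zero_iff, hcdef]
    show ‖(w - 1)/(w + 1)‖ < 1
    rw [norm_div, div_lt_one (by simpa [norm_pos_iff] using hw1 w hw)]
    have := abs_sub_lt_abs_add_conj hw' (by norm_num : (0:ℝ) < (1:ℂ).re)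
    simpa using this
  have hcdiff : DifferentiableOn ℂ c HP := by
    apply DifferentiableOn.div
    · exact (differentiable_id.sub (differentiable_const _)).differentiableOn
    · exact (differentiable_id.add (differentiable_const _)).differentiableOn
    · exact hw1
  have hone : ∀ z : ℂ, z ∈ ball (0:ℂ) 1 → 1 - z ≠ 0 := by
    intro z hz h
    rw [mem_ball_zero_iff] at hz
    have : z = 1 := by linear_combination -h
    rw [this] at hz; simp at hz
  have hφne : ∀ z ∈ ball (0:ℂ) 1, 1 - φ z ≠ 0 := by
    intro z hz h
    have : φ z = 1 := by linear_combination -h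
    have h2 := hmap z hz
    rw [this] at h2; simp at h2
  -- the half-plane transform of φ
  set P : ℂ → ℂ := fun w => (1 + φ (c w)) / (1 - φ (c w)) with hPdef
  have hPdiff : DifferentiableOn ℂ P HP := by
    have hφc : DifferentiableOn ℂ (fun w => φ (c w)) HP := hφ.comp hcdiff hcball
    apply DifferentiableOn.div
    · exact (differentiable_const _).differentiableOn.add hφc
    · exact (differentiable_const _).differentiableOn.sub hφc
    · intro w hw; exact hφne _ (hcball w hw)
  have hreu : ∀ u : ℂ, ‖u‖ < 1 → 0 < ((1 + u)/(1 - u)).re := by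
    intro u hu
    have h1u : (1:ℂ) - u ≠ 0 := by
      intro h
      have : u = 1 := by linear_combination -h
      rw [this] at hu; simp at hu
    rw [re_div_pos_iff h1u]
    have hu2 : Complex.normSq u < 1 := by
      rw [← Complex.sq_norm]; nlinarith [norm_nonneg u]
    simp only [Complex.mul_re, Complex.add_re, Complex.add_im, Complex.sub_re, Complex.sub_im,
      Complex.one_re, Complex.one_im, Complex.conj_re, Complex.conj_im, map_sub,
      map_one, Complex.normSq_apply] at *
    nlinarith
  have hPmem : ∀ w ∈ HP, P w ∈ HP := by
    intro w hw
    rw [HP_def]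
    exact hreu _ (hmap _ (hcball w hw))
  -- inverse Cayley
  have hcw : ∀ w ∈ HP, (1 + c w) / (1 - c w) = w := by
    intro w hw
    have h1 : 1 - c w ≠ 0 := hone _ (hcball w hw)
    rw [div_eq_iff h1, hcdef]
    field_simp [hw1 w hw]
    ring
  -- boundary estimate along the positive real axis
  have hPt : ∀ t : ℝ, 1 ≤ t → 16 * C ≤ t^3 → ‖P t - t‖ ≤ 16 * C / t^2 := by
    intro t ht1 ht3
    have htpos : (0:ℝ) < t := by linarith
    have hwHP : (t:ℂ) ∈ HP := by rw [HP_def]; simpa using htpos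
    set z : ℂ := c t with hzdef
    have hz : z ∈ ball (0:ℂ) 1 := hcball _ hwHP
    set u : ℂ := φ z with hudef
    have h1z : (1:ℂ) - z ≠ 0 := hone z hz
    have h1u : (1:ℂ) - u ≠ 0 := hφne z hz
    set dz : ℝ := ‖1 - z‖ with hdzdef
    have hdzpos : 0 < dz := by
      rw [hdzdef]
      exact (norm_pos_iff).2 h1z
    have ht1c : ((t:ℂ) + 1) ≠ 0 := hw1 _ hwHP
    have hzform : (1:ℂ) - z = 2 / ((t:ℂ) + 1) := by
      rw [hzdef, hcdef]
      field_simp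
      ring
    have hdzval : dz = 2 / (t + 1) := by
      rw [hdzdef, hzform, norm_div]
      norm_num
      rw [show ((t:ℂ) + 1) = ((t + 1 : ℝ) : ℂ) by push_cast; ring, Complex.norm_real, Real.norm_eq_abs,
        abs_of_pos (by linarith)]
    have hdzle : dz ≤ 2 / t := by
      rw [hdzval]
      apply div_le_div_of_nonneg_left (by norm_num) htpos (by linarith)
    have huz : ‖u - z‖ ≤ C * dz^4 := by
      have := hbound z hz
      rwa [show ‖z - 1‖ = dz by rw [hdzdef]; exact norm_sub_rev z 1] at this
    have hcdz : C * dz^3 ≤ 1/2 := by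
      have h8 : dz^3 ≤ 8 / t^3 := by
        calc dz^3 ≤ (2/t)^3 := by
              apply pow_le_pow_left₀ (le_of_lt hdzpos) hdzle
          _ = 8 / t^3 := by rw [div_pow]; norm_num
      have : C * dz^3 ≤ C * (8 / t^3) := by nlinarith
      have h2 : C * (8 / t^3) ≤ 1/2 := by
        rw [mul_div_assoc', div_le_iff₀ (by positivity : (0:ℝ) < t^3)]
        linarith
      linarith
    have h1uabs : dz / 2 ≤ ‖1 - u‖ := by
      have htri : dz ≤ ‖1 - u‖ + ‖u - z‖ := by
        have he : (1:ℂ) - z = (1 - u) + (u - z) := by ring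
        rw [hdzdef, he]
        exact norm_add_le _ _
      nlinarith [huz, hdzpos, mul_nonneg hdzpos.le (sub_nonneg.2 hcdz)]
    have hid : P ↑t - ↑t = 2 * (u - z) / ((1 - u) * (1 - z)) := by
      have ht' : (t:ℂ) = (1 + z)/(1 - z) := (hcw _ hwHP).symm
      have hPe : P ↑t = (1 + u)/(1 - u) := rfl
      rw [hPe, ht']
      field_simp
      ring
    rw [hid, norm_div, norm_mul, norm_mul]
    have habs2 : ‖(2:ℂ)‖ = 2 := by norm_num
    rw [habs2, ← hdzdef]
    have hbot : (0:ℝ) < dz/2 * dz := by positivity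
    have hle2 : dz/2 * dz ≤ ‖1 - u‖ * dz :=
      mul_le_mul_of_nonneg_right h1uabs hdzpos.le
    have hle1 : 2 * ‖u - z‖ ≤ 2 * (C * dz^4) := by linarith
    have hmain := div_le_div₀ (by positivity : (0:ℝ) ≤ 2 * (C * dz^4)) hle1 hbot hle2
    have heq : 2 * (C * dz^4) / (dz/2 * dz) = 4 * C * dz^2 := by
      field_simp
      ring
    rw [heq] at hmain
    have hdz2 : dz^2 ≤ (2/t)^2 := pow_le_pow_left₀ hdzpos.le hdzle 2
    calc 2 * ‖u - z‖ / (‖1 - u‖ * dz) ≤ 4 * C * dz^2 := hmain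
      _ ≤ 4 * C * (2/t)^2 := by nlinarith
      _ = 16 * C / t^2 := by rw [div_pow]; ring
  -- eventual bounds along the integers
  have T1 : Filter.Tendsto (fun n : ℕ => 1/(n:ℝ)) Filter.atTop (nhds 0) :=
    tendsto_one_div_atTop_nhds_zero_nat
  have hg0 : Filter.Tendsto (fun n : ℕ => 16*C*(1/(n:ℝ))*(1/(n:ℝ))) Filter.atTop (nhds 0) := by
    have := ((tendsto_const_nhds (x := (16*C : ℝ)) (f := Filter.atTop (α := ℕ))).mul T1).mul T1
    simpa using this
  have hN : ∀ᶠ n : ℕ in Filter.atTop,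
      ‖P (((n:ℝ)):ℂ) - (((n:ℝ)):ℂ)‖ ≤ 16*C*(1/(n:ℝ))*(1/(n:ℝ)) ∧ (1:ℝ) ≤ (n:ℝ) := by
    filter_upwards [Filter.eventually_ge_atTop (max 1 (Nat.ceil (16*C)))] with n hn
    have hn1 : (1:ℕ) ≤ n := le_trans (le_max_left _ _) hn
    have hn1' : (1:ℝ) ≤ (n:ℝ) := by exact_mod_cast hn1
    have hnC : 16*C ≤ (n:ℝ) := Nat.ceil_le.mp (le_trans (le_max_right _ _) hn)
    have hsq : 1 ≤ (n:ℝ)^2 := by nlinarith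
    have h3 : 16*C ≤ (n:ℝ)^3 := by nlinarith
    refine ⟨?_, hn1'⟩
    have := hPt (n:ℝ) hn1' h3
    have heq : 16*C/(n:ℝ)^2 = 16*C*(1/(n:ℝ))*(1/(n:ℝ)) := by
      field_simp
    linarith
  set X : ℕ → ℝ := fun n => (P (((n:ℝ)):ℂ)).re - (n:ℝ) with hXdef
  set Y : ℕ → ℝ := fun n => (P (((n:ℝ)):ℂ)).im with hYdef
  have hXb : ∀ᶠ n : ℕ in Filter.atTop, ‖X n‖ ≤ 16*C*(1/(n:ℝ))*(1/(n:ℝ)) := by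
    filter_upwards [hN] with n hn
    have : |X n| ≤ ‖P (((n:ℝ)):ℂ) - (((n:ℝ)):ℂ)‖ := by
      have := Complex.abs_re_le_norm (P (((n:ℝ)):ℂ) - (((n:ℝ)):ℂ))
      simpa [hXdef, Complex.sub_re, Complex.ofReal_re] using this
    rw [Real.norm_eq_abs]
    linarith [hn.1]
  have hYb : ∀ᶠ n : ℕ in Filter.atTop, ‖Y n‖ ≤ 16*C*(1/(n:ℝ))*(1/(n:ℝ)) := by
    filter_upwards [hN] with n hn
    have : |Y n| ≤ ‖P (((n:ℝ)):ℂ) - (((n:ℝ)):ℂ)‖ := by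
      have := Complex.abs_im_le_norm (P (((n:ℝ)):ℂ) - (((n:ℝ)):ℂ))
      simpa [hYdef, Complex.sub_im, Complex.ofReal_im] using this
    rw [Real.norm_eq_abs]
    linarith [hn.1]
  have hX : Filter.Tendsto X Filter.atTop (nhds 0) := squeeze_zero_norm' hXb hg0
  have hY : Filter.Tendsto Y Filter.atTop (nhds 0) := squeeze_zero_norm' hYb hg0
  have hXT : Filter.Tendsto (fun n : ℕ => X n * (1/(n:ℝ))) Filter.atTop (nhds 0) := by
    simpa using hX.mul T1
  have hYT : Filter.Tendsto (fun n : ℕ => Y n * (1/(n:ℝ))) Filter.atTop (nhds 0) := by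
    simpa using hY.mul T1
  -- Step A : Re (P w) ≥ Re w on HP
  have hA : ∀ w ∈ HP, w.re ≤ (P w).re := by
    intro w hw
    have hf : Filter.Tendsto (fun n : ℕ =>
        w.re * (Complex.normSq (P w) * (1/(n:ℝ)) * (1/(n:ℝ))
          + (1 + X n * (1/(n:ℝ)))^2 + (Y n * (1/(n:ℝ)))^2)) Filter.atTop (nhds w.re) := by
      have := (tendsto_const_nhds (x := w.re) (f := Filter.atTop (α := ℕ))).mul
        (((((tendsto_const_nhds (x := Complex.normSq (P w))).mul T1).mul T1).add
          (((tendsto_const_nhds (x := (1:ℝ))).add hXT).pow 2)).add (hYT.pow 2))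
      simpa using this
    have hg : Filter.Tendsto (fun n : ℕ =>
        (Complex.normSq w * (1/(n:ℝ)) * (1/(n:ℝ)) + 1) * ((P w).re * (1 + X n * (1/(n:ℝ))))
          + 2 * w.re * ((P w).im * (Y n * (1/(n:ℝ)))) * (1/(n:ℝ))) Filter.atTop
        (nhds ((P w).re)) := by
      have := (((((tendsto_const_nhds (x := Complex.normSq w) (f := Filter.atTop (α := ℕ))).mul
          T1).mul T1).add (tendsto_const_nhds (x := (1:ℝ)))).mul
            ((tendsto_const_nhds (x := (P w).re)).mul
              ((tendsto_const_nhds (x := (1:ℝ))).add hXT))).add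
        ((((tendsto_const_nhds (x := 2*w.re)).mul
          ((tendsto_const_nhds (x := (P w).im)).mul hYT)).mul T1))
      simpa using this
    refine le_of_tendsto_of_tendsto hf hg ?_
    filter_upwards [hN] with n hn
    have hn1 : (1:ℝ) ≤ (n:ℝ) := hn.2
    have hnne : (n:ℝ) ≠ 0 := by linarith
    have hv : (((n:ℝ)):ℂ) ∈ HP := by
      rw [HP_def]
      simpa using (by linarith : (0:ℝ) < (n:ℝ))
    have hsp := schwarz_pick_HP hPdiff hPmem hv hw
    rw [Complex.conj_ofReal] at hsp
    have hineq := sp_expand hsp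
    have h3 : (0:ℝ) < (n:ℝ)^3 := by positivity
    rw [← mul_le_mul_iff_of_pos_right h3]
    have e1 : (w.re * (Complex.normSq (P w) * (1/(n:ℝ)) * (1/(n:ℝ))
          + (1 + X n * (1/(n:ℝ)))^2 + (Y n * (1/(n:ℝ)))^2)) * (n:ℝ)^3
        = (n:ℝ) * w.re * (Complex.normSq (P w) + Complex.normSq (P (((n:ℝ)):ℂ))) := by
      simp only [hXdef, hYdef, Complex.normSq_apply]
      field_simp
      ring
    have e2 : ((Complex.normSq w * (1/(n:ℝ)) * (1/(n:ℝ)) + 1) * ((P w).re * (1 + X n * (1/(n:ℝ))))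
          + 2 * w.re * ((P w).im * (Y n * (1/(n:ℝ)))) * (1/(n:ℝ))) * (n:ℝ)^3
        = (Complex.normSq w + (n:ℝ)^2) * ((P w).re * (P (((n:ℝ)):ℂ)).re)
          + 2 * (n:ℝ) * w.re * ((P w).im * (P (((n:ℝ)):ℂ)).im) := by
      simp only [hXdef, hYdef]
      field_simp
      ring
    rw [e1, e2]
    exact hineq
  -- Step B : the defect function R
  set R : ℂ → ℂ := fun w => P w - w with hRdef
  have hRdiff : DifferentiableOn ℂ R HP := hPdiff.sub differentiable_id.differentiableOn
  have hRre : ∀ w ∈ HP, 0 ≤ (R w).re := by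
    intro w hw
    have := hA w hw
    simp only [hRdef, Complex.sub_re]
    linarith
  have hre : ∀ n : ℕ, (R (((n:ℝ)):ℂ)).re = X n := by
    intro n
    simp [hRdef, hXdef]
  have him : ∀ n : ℕ, (R (((n:ℝ)):ℂ)).im = Y n := by
    intro n
    simp [hRdef, hYdef]
  have h1HP : (1:ℂ) ∈ HP := by rw [HP_def]; norm_num
  have hcase : ∃ w₀ ∈ HP, (R w₀).re = 0 := by
    by_contra hcon
    push_neg at hcon
    have hpos : ∀ w ∈ HP, 0 < (R w).re := fun w hw =>
      lt_of_le_of_ne (hRre w hw) (Ne.symm (hcon w hw))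
    have hRmem : ∀ w ∈ HP, R w ∈ HP := fun w hw => (HP_def _).2 (hpos w hw)
    have hg1 : Filter.Tendsto (fun n : ℕ => 16*C*(1/(n:ℝ))) Filter.atTop (nhds 0) := by
      simpa using (tendsto_const_nhds (x := 16*C) (f := Filter.atTop (α := ℕ))).mul T1
    have hXn : Filter.Tendsto (fun n : ℕ => (n:ℝ) * X n) Filter.atTop (nhds 0) := by
      apply squeeze_zero_norm' _ hg1
      filter_upwards [hXb, Filter.eventually_ge_atTop 1] with n hb hn1
      have hn1' : (1:ℝ) ≤ (n:ℝ) := by exact_mod_cast hn1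
      have hnne : (n:ℝ) ≠ 0 := by linarith
      rw [Real.norm_eq_abs, abs_mul, _root_.abs_of_nonneg (by linarith : (0:ℝ) ≤ (n:ℝ))]
      rw [Real.norm_eq_abs] at hb
      calc (n:ℝ) * |X n| ≤ (n:ℝ) * (16*C*(1/(n:ℝ))*(1/(n:ℝ))) := by
            apply mul_le_mul_of_nonneg_left hb (by linarith)
        _ = 16*C*(1/(n:ℝ)) := by field_simp
    have hfB : Filter.Tendsto (fun n : ℕ => Complex.normSq (R 1) + ((X n)^2 + (Y n)^2))
        Filter.atTop (nhds (Complex.normSq (R 1))) := by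
      have := (tendsto_const_nhds (x := Complex.normSq (R 1)) (f := Filter.atTop (α := ℕ))).add
        ((hX.pow 2).add (hY.pow 2))
      simpa using this
    have hgB : Filter.Tendsto (fun n : ℕ =>
        (1/(n:ℝ)) * ((R 1).re * X n) + ((n:ℝ) * X n) * (R 1).re + 2 * ((R 1).im * Y n))
        Filter.atTop (nhds 0) := by
      have := ((T1.mul ((tendsto_const_nhds (x := (R 1).re)).mul hX)).add
        (hXn.mul (tendsto_const_nhds (x := (R 1).re)))).add
        ((tendsto_const_nhds (x := (2:ℝ))).mul ((tendsto_const_nhds (x := (R 1).im)).mul hY))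
      simpa using this
    have hle : Complex.normSq (R 1) ≤ 0 := by
      refine le_of_tendsto_of_tendsto hfB hgB ?_
      filter_upwards [hN] with n hn
      have hn1 : (1:ℝ) ≤ (n:ℝ) := hn.2
      have hnne : (n:ℝ) ≠ 0 := by linarith
      have hnpos : (0:ℝ) < (n:ℝ) := by linarith
      have hv : (((n:ℝ)):ℂ) ∈ HP := by
        rw [HP_def]
        simpa using hnpos
      have hsp := schwarz_pick_HP hRdiff hRmem hv h1HP
      rw [Complex.conj_ofReal] at hsp
      have hineq := sp_expand hsp
      simp only [Complex.one_re, Complex.one_im, Complex.normSq_one,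
        Complex.normSq_apply, hre n, him n] at hineq
      rw [← mul_le_mul_iff_of_pos_right hnpos]
      have e1 : (Complex.normSq (R 1) + ((X n)^2 + (Y n)^2)) * (n:ℝ)
          = (n:ℝ) * 1 * (((R 1).re * (R 1).re + (R 1).im * (R 1).im) + (X n * X n + Y n * Y n)) := by
        simp only [Complex.normSq_apply]
        ring
      have e2 : ((1/(n:ℝ)) * ((R 1).re * X n) + ((n:ℝ) * X n) * (R 1).re + 2 * ((R 1).im * Y n)) * (n:ℝ)
          = (1*1 + 0*0 + (n:ℝ)^2) * ((R 1).re * X n) + 2 * (n:ℝ) * 1 * ((R 1).im * Y n) := by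
        field_simp
        ring
      rw [e1, e2]
      exact hineq
    have hR10 : R 1 = 0 := by
      rw [← Complex.normSq_eq_zero]
      exact le_antisymm hle (Complex.normSq_nonneg _)
    exact hcon 1 h1HP (by rw [hR10]; simp)
  obtain ⟨w₀, hw₀, hw₀0⟩ := hcase
  have hconst := const_of_re_eq_zero hRdiff hRre hw₀ hw₀0
  have hRw₀ : R w₀ = 0 := by
    have hb : Filter.Tendsto (fun _ : ℕ => ‖R w₀‖) Filter.atTop
        (nhds (‖R w₀‖)) := tendsto_const_nhds
    have hle : ‖R w₀‖ ≤ 0 := by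
      refine le_of_tendsto_of_tendsto hb hg0 ?_
      filter_upwards [hN] with n hn
      have hn1 : (1:ℝ) ≤ (n:ℝ) := hn.2
      have hv : (((n:ℝ)):ℂ) ∈ HP := by
        rw [HP_def]
        simpa using (by linarith : (0:ℝ) < (n:ℝ))
      have hcn := hconst _ hv
      rw [← hcn]
      exact hn.1
    have h0 : ‖R w₀‖ = 0 := le_antisymm hle (norm_nonneg _)
    exact norm_eq_zero.mp h0
  have hPid : ∀ w ∈ HP, P w = w := by
    intro w hw
    have h := hconst w hw
    rw [hRw₀] at h
    have h2 : P w - w = 0 := h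
    linear_combination h2
  intro z hz
  have h1z : (1:ℂ) - z ≠ 0 := hone z hz
  have habsz : ‖z‖ < 1 := by
    have := mem_ball_zero_iff.1 hz
    exact this
  have hwz : (1 + z)/(1 - z) ∈ HP := by
    rw [HP_def]
    exact hreu z habsz
  have hden : (1 + z)/(1 - z) + 1 ≠ 0 := hw1 _ hwz
  have hcz : c ((1 + z)/(1 - z)) = z := by
    rw [hcdef]
    show ((1 + z)/(1 - z) - 1) / ((1 + z)/(1 - z) + 1) = z
    rw [div_eq_iff hden]
    field_simp
    ring
  have h2 : (1 + φ z) / (1 - φ z) = (1 + z)/(1 - z) := by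
    have h3 := hPid _ hwz
    rw [hPdef] at h3
    simp only at h3
    rw [hcz] at h3
    exact h3
  have hφz : 1 - φ z ≠ 0 := hφne z hz
  have h4 : (1 + φ z) * (1 - z) = (1 + z) * (1 - φ z) := by
    rw [div_eq_div_iff hφz h1z] at h2
    linear_combination h2
  linear_combination h4/2
end

section
/- Let g be holomorphic on the upper half-plane ℍ with Im(g(z)) ≥ 0 for all z ∈ ℍ, and suppose there exist constants C > 0 and δ > 0 such that |g(z)| ≤ C·|z|² for all z ∈ ℍ with |z| < δ. Then g(z) = 0 for every z ∈ ℍ. -/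
open Complex

section Aux
open Metric Filter Topology

private lemma normSq_conj_sub (w p : ℂ) :
    normSq (w - (starRingEnd ℂ) p) - normSq (w - p) = 4 * w.im * p.im := by
  simp [normSq_apply, sub_re, sub_im, conj_re, conj_im]; ring

private lemma sub_conj_ne_zero {w p : ℂ} (hw : 0 < w.im) (hp : 0 < p.im) :
    w - (starRingEnd ℂ) p ≠ 0 := by
  intro h
  have := congrArg Complex.im h
  simp [sub_im, conj_im] at this
  linarith

private lemma mob_abs_lt {w p : ℂ} (hw : 0 < w.im) (hp : 0 < p.im) :
    ‖(w - p) / (w - (starRingEnd ℂ) p)‖ < 1 := by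
  have hne := sub_conj_ne_zero hw hp
  rw [norm_div, div_lt_one (norm_pos_iff.mpr hne)]
  rw [Complex.norm_def, Complex.norm_def]
  apply Real.sqrt_lt_sqrt (normSq_nonneg _)
  have := normSq_conj_sub w p
  nlinarith

private lemma tinv_im_pos {c u : ℂ} (hc : 0 < c.im) (hu : ‖u‖ < 1) :
    0 < ((c - (starRingEnd ℂ) c * u) / (1 - u)).im := by
  have hnu : normSq u < 1 := by
    have := Complex.sq_norm u
    nlinarith [norm_nonneg u]
  have hu1 : (1 : ℂ) - u ≠ 0 := by
    intro h
    have : u = 1 := by linear_combination -h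
    rw [this] at hu; simp at hu
  have hns : 0 < normSq (1 - u) := normSq_pos.mpr hu1
  rw [Complex.div_im, div_sub_div_same]
  apply div_pos _ hns
  have key : (c - (starRingEnd ℂ) c * u).im * (1 - u).re -
      (c - (starRingEnd ℂ) c * u).re * (1 - u).im
      = c.im * (1 - (u.re * u.re + u.im * u.im)) := by
    simp [sub_re, sub_im, mul_re, mul_im, conj_re, conj_im]; ring
  rw [key]
  have : u.re * u.re + u.im * u.im < 1 := by rw [normSq_apply] at hnu; linarith
  nlinarith

private lemma schwarz_pick_im (g : ℂ → ℂ) (hg : DifferentiableOn ℂ g {z : ℂ | 0 < z.im})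
    (hmap : ∀ z : ℂ, 0 < z.im → 0 < (g z).im)
    (c : ℂ) (hc : 0 < c.im) (z : ℂ) (hz : 0 < z.im) :
    z.im * c.im * normSq (g z - (starRingEnd ℂ) (g c)) ≤
      (g z).im * (g c).im * normSq (z - (starRingEnd ℂ) c) := by
  have hopen : IsOpen {z : ℂ | 0 < z.im} := isOpen_lt continuous_const Complex.continuous_im
  set w0 := g c with hw0def
  have hw0 : 0 < w0.im := hmap c hc
  set T' : ℂ → ℂ := fun u => (c - (starRingEnd ℂ) c * u) / (1 - u) with hT'
  set F : ℂ → ℂ := fun u => (g (T' u) - w0) / (g (T' u) - (starRingEnd ℂ) w0) with hF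
  -- differentiability
  have hd : DifferentiableOn ℂ F (ball (0:ℂ) 1) := by
    intro u hu
    rw [mem_ball_zero_iff] at hu
    have hu1 : (1 : ℂ) - u ≠ 0 := by
      intro h
      have : u = 1 := by linear_combination -h
      rw [this] at hu; simp at hu
    have hT'd : DifferentiableAt ℂ T' u := by
      apply DifferentiableAt.div
      · fun_prop
      · fun_prop
      · exact hu1
    have him : 0 < (T' u).im := tinv_im_pos hc hu
    have hgd : DifferentiableAt ℂ g (T' u) :=
      hg.differentiableAt (hopen.mem_nhds him)
    have hcomp : DifferentiableAt ℂ (fun u => g (T' u)) u := hgd.comp u hT'd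
    have hden : g (T' u) - (starRingEnd ℂ) w0 ≠ 0 :=
      sub_conj_ne_zero (hmap _ him) hw0
    exact ((hcomp.sub_const _).div (hcomp.sub_const _) hden).differentiableWithinAt
  have hmaps : Set.MapsTo F (ball (0:ℂ) 1) (ball (0:ℂ) 1) := by
    intro u hu
    rw [mem_ball_zero_iff] at hu ⊢
    exact mob_abs_lt (hmap _ (tinv_im_pos hc hu)) hw0
  have hF0 : F 0 = 0 := by
    have : T' 0 = c := by simp [hT']
    simp [hF, this, hw0def]
  -- apply Schwarz at u = T z
  have hcc : c - (starRingEnd ℂ) c ≠ 0 := by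
    intro h
    have := congrArg Complex.im h
    simp [sub_im, conj_im] at this
    linarith
  have hzc : z - (starRingEnd ℂ) c ≠ 0 := sub_conj_ne_zero hz hc
  have hTz : ‖(z - c) / (z - (starRingEnd ℂ) c)‖ < 1 := mob_abs_lt hz hc
  have key := Complex.norm_le_norm_of_mapsTo_ball hd (hmaps.mono_right ball_subset_closedBall) hF0 hTz
  have hTinv : T' ((z - c) / (z - (starRingEnd ℂ) c)) = z := by
    rw [hT']
    have hden : (1 : ℂ) - (z - c) / (z - (starRingEnd ℂ) c) ≠ 0 := by
      rw [sub_ne_zero]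
      intro h
      have : z - (starRingEnd ℂ) c = z - c := by
        field_simp at h
        linear_combination h
      have h2 : (starRingEnd ℂ) c = c := by linear_combination -this
      exact hcc (by linear_combination -h2)
    field_simp
    rw [div_eq_iff (by rw [show z - (starRingEnd ℂ) c - (z - c) = c - (starRingEnd ℂ) c by ring]; exact hcc)]
    ring
  simp only [hF] at key
  rw [hTinv] at key
  -- key : abs ((g z - w0)/(g z - conj w0)) ≤ abs ((z-c)/(z-conj c))
  have hgzc : g z - (starRingEnd ℂ) w0 ≠ 0 := sub_conj_ne_zero (hmap z hz) hw0
  rw [norm_div, norm_div, div_le_div_iff₀ (norm_pos_iff.mpr hgzc) (norm_pos_iff.mpr hzc)] at key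
  have key2 : normSq (g z - w0) * normSq (z - (starRingEnd ℂ) c) ≤
      normSq (z - c) * normSq (g z - (starRingEnd ℂ) w0) := by
    have h1 := mul_self_le_mul_self (by positivity) key
    rw [← Complex.sq_norm, ← Complex.sq_norm, ← Complex.sq_norm, ← Complex.sq_norm]
    nlinarith [norm_nonneg (g z - w0), norm_nonneg (z - (starRingEnd ℂ) c),
      norm_nonneg (z - c), norm_nonneg (g z - (starRingEnd ℂ) w0)]
  have e1 := normSq_conj_sub z c
  have e2 := normSq_conj_sub (g z) w0
  nlinarith [normSq_nonneg (z - (starRingEnd ℂ) c), normSq_nonneg (g z - (starRingEnd ℂ) w0)]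

end Aux

open Metric Filter Topology in
/-- A holomorphic function on the upper half-plane with nonnegative imaginary part
that is `O(z²)` as `z → 0` vanishes identically. -/
theorem vanishing_of_quadratic_decay
    (g : ℂ → ℂ) (hg : DifferentiableOn ℂ g {z : ℂ | 0 < z.im})
    (hmap : ∀ z : ℂ, 0 < z.im → 0 ≤ (g z).im)
    (C : ℝ) (hC : 0 < C) (δ : ℝ) (hδ : 0 < δ)
    (hbound : ∀ z : ℂ, 0 < z.im → ‖z‖ < δ → ‖g z‖ ≤ C * ‖z‖ ^ 2) :
    ∀ z : ℂ, 0 < z.im → g z = 0 := by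
  intro c hc
  have hK : 0 < normSq c := normSq_pos.mpr (by intro h; rw [h] at hc; simp at hc)
  have key : ∀ ε : ℝ, 0 < ε →
      c.im * normSq (g c + (ε : ℂ) * c) ≤ ε * ((g c).im + ε * c.im) * normSq c := by
    intro ε hε
    set h : ℂ → ℂ := fun z => g z + (ε : ℂ) * z with hh
    have hhim : ∀ z : ℂ, (h z).im = (g z).im + ε * z.im := by
      intro z
      simp [hh, Complex.add_im, Complex.mul_im, Complex.ofReal_re, Complex.ofReal_im]
    have hhdiff : DifferentiableOn ℂ h {z : ℂ | 0 < z.im} :=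
      hg.add ((differentiable_id.const_mul _).differentiableOn)
    have hhpos : ∀ z : ℂ, 0 < z.im → 0 < (h z).im := by
      intro z hz
      rw [hhim]
      have := hmap z hz
      nlinarith
    have hw0 : 0 < (h c).im := hhpos c hc
    -- imaginary-axis points
    have hit : ∀ t : ℝ, 0 < t → (I * (t : ℂ)).im = t := by
      intro t ht; simp
    have master : ∀ t : ℝ, 0 < t →
        t * c.im * normSq (h (I * t) - (starRingEnd ℂ) (h c)) ≤
          (h (I * t)).im * (h c).im * normSq (I * t - (starRingEnd ℂ) c) := by
      intro t ht
      have := schwarz_pick_im h hhdiff hhpos c hc (I * t) (by rw [hit t ht]; exact ht)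
      rwa [hit t ht] at this
    have habsit : ∀ t : ℝ, 0 < t → ‖I * (t : ℂ)‖ = t := by
      intro t ht
      rw [norm_mul, Complex.norm_I, Complex.norm_real, Real.norm_eq_abs, one_mul, abs_of_pos ht]
    have hnorm : ∀ t : ℝ, 0 < t → t < min δ 1 → ‖h (I * t)‖ ≤ (C * t + ε) * t := by
      intro t ht ht'
      have h1 : ‖g (I * t)‖ ≤ C * t ^ 2 := by
        have := hbound (I * t) (by rw [hit t ht]; exact ht)
          (by rw [habsit t ht]; exact ht'.trans_le (min_le_left _ _))
        rwa [habsit t ht] at this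
      calc ‖h (I * t)‖ ≤ ‖g (I * t)‖ + ‖(ε : ℂ) * (I * t)‖ := by
            simpa [hh] using norm_add_le (g (I * t)) ((ε : ℂ) * (I * t))
        _ ≤ C * t ^ 2 + ε * t := by
            rw [norm_mul, Complex.norm_real, Real.norm_eq_abs, abs_of_pos hε, habsit t ht]
            linarith
        _ = (C * t + ε) * t := by ring
    -- eventual inequality
    have hev : ∀ᶠ t : ℝ in 𝓝[>] (0:ℝ),
        c.im * normSq (h (I * (t:ℂ)) - (starRingEnd ℂ) (h c)) ≤
          (C * t + ε) * (h c).im * normSq (I * (t:ℂ) - (starRingEnd ℂ) c) := by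
      filter_upwards [eventually_mem_nhdsWithin,
        eventually_nhdsWithin_of_eventually_nhds (eventually_lt_nhds (lt_min hδ one_pos))]
        with t ht ht'
      have ht : (0:ℝ) < t := ht
      have hM := master t ht
      have hle : (h (I * t)).im ≤ (C * t + ε) * t := (Complex.im_le_norm _).trans (hnorm t ht ht')
      have hpos1 : 0 < (h (I * t)).im := hhpos _ (by rw [hit t ht]; exact ht)
      have hN1 : 0 ≤ normSq (I * t - (starRingEnd ℂ) c) := normSq_nonneg _
      have h2 : (h (I * t)).im * (h c).im * normSq (I * t - (starRingEnd ℂ) c) ≤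
          ((C * t + ε) * t) * ((h c).im * normSq (I * t - (starRingEnd ℂ) c)) := by
        nlinarith [mul_nonneg hw0.le hN1]
      have h3 : t * (c.im * normSq (h (I * t) - (starRingEnd ℂ) (h c))) ≤
          t * ((C * t + ε) * (h c).im * normSq (I * t - (starRingEnd ℂ) c)) := by
        nlinarith
      exact le_of_mul_le_mul_left h3 ht
    -- limits
    have htend0 : Tendsto (fun t : ℝ => h (I * t)) (𝓝[>] (0:ℝ)) (𝓝 0) := by
      apply squeeze_zero_norm' (a := fun t : ℝ => (C * t + ε) * t)
      · filter_upwards [eventually_mem_nhdsWithin,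
          eventually_nhdsWithin_of_eventually_nhds (eventually_lt_nhds (lt_min hδ one_pos))]
          with t ht ht'
        exact hnorm t ht ht'
      · have : Tendsto (fun t : ℝ => (C * t + ε) * t) (𝓝 (0:ℝ)) (𝓝 ((C * 0 + ε) * 0)) :=
          Continuous.tendsto (by continuity) 0
        simpa using this.mono_left nhdsWithin_le_nhds
    have hB : Tendsto (fun t : ℝ => c.im * normSq (h (I * t) - (starRingEnd ℂ) (h c)))
        (𝓝[>] (0:ℝ)) (𝓝 (c.im * normSq (h c))) := by
      have hcont : Continuous fun w : ℂ => c.im * normSq (w - (starRingEnd ℂ) (h c)) :=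
        continuous_const.mul (Complex.continuous_normSq.comp (continuous_id.sub continuous_const))
      have := (hcont.tendsto 0).comp htend0
      simpa [Function.comp_def, normSq_conj] using this
    have hA : Tendsto (fun t : ℝ => (C * t + ε) * (h c).im * normSq (I * t - (starRingEnd ℂ) c))
        (𝓝[>] (0:ℝ)) (𝓝 (ε * (h c).im * normSq c)) := by
      have hcont : Continuous fun t : ℝ =>
          (C * t + ε) * (h c).im * normSq (I * (t:ℂ) - (starRingEnd ℂ) c) := by
        apply Continuous.mul
        · fun_prop
        · exact Complex.continuous_normSq.comp
            ((continuous_const.mul Complex.continuous_ofReal).sub continuous_const)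
      have := hcont.tendsto 0
      simp only [mul_zero, Complex.ofReal_zero, zero_sub, normSq_neg, normSq_conj] at this
      simpa using this.mono_left nhdsWithin_le_nhds
    have hfin := le_of_tendsto_of_tendsto hB hA hev
    have him : (h c).im = (g c).im + ε * c.im := hhim c
    rw [him] at hfin
    simpa [hh] using hfin
  -- endgame
  have haim : 0 ≤ (g c).im := hmap c hc
  have hre : ∀ ε : ℝ, (g c + (ε : ℂ) * c).re = (g c).re + ε * c.re := by
    intro ε; simp [Complex.add_re, Complex.mul_re]
  have him : ∀ ε : ℝ, (g c + (ε : ℂ) * c).im = (g c).im + ε * c.im := by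
    intro ε; simp [Complex.add_im, Complex.mul_im]
  have him0 : (g c).im = 0 := by
    have h1 : ∀ ε : ℝ, 0 < ε → c.im * ((g c).im + ε * c.im) ≤ ε * normSq c := by
      intro ε hε
      have hk := key ε hε
      have hX : 0 < (g c).im + ε * c.im := by nlinarith
      have hNS : ((g c).im + ε * c.im) ^ 2 ≤ normSq (g c + (ε : ℂ) * c) := by
        rw [normSq_apply, hre, him]
        nlinarith [sq_nonneg ((g c).re + ε * c.re)]
      have h2 : (c.im * ((g c).im + ε * c.im)) * ((g c).im + ε * c.im) ≤
          (ε * normSq c) * ((g c).im + ε * c.im) := by nlinarith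
      exact le_of_mul_le_mul_right h2 hX
    have hB : Tendsto (fun ε : ℝ => c.im * ((g c).im + ε * c.im)) (𝓝[>] (0:ℝ))
        (𝓝 (c.im * (g c).im)) := by
      have : Tendsto (fun ε : ℝ => c.im * ((g c).im + ε * c.im)) (𝓝 (0:ℝ))
          (𝓝 (c.im * ((g c).im + 0 * c.im))) := Continuous.tendsto (by fun_prop) 0
      simpa using this.mono_left nhdsWithin_le_nhds
    have hA : Tendsto (fun ε : ℝ => ε * normSq c) (𝓝[>] (0:ℝ)) (𝓝 0) := by
      have : Tendsto (fun ε : ℝ => ε * normSq c) (𝓝 (0:ℝ)) (𝓝 (0 * normSq c)) :=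
        Continuous.tendsto (by fun_prop) 0
      simpa using this.mono_left nhdsWithin_le_nhds
    have := le_of_tendsto_of_tendsto hB hA
      (by filter_upwards [eventually_mem_nhdsWithin] with ε hε; exact h1 ε hε)
    nlinarith
  have hre0 : (g c).re = 0 := by
    have h1 : ∀ ε : ℝ, 0 < ε → ((g c).re + ε * c.re) ^ 2 ≤ ε ^ 2 * normSq c := by
      intro ε hε
      have hk := key ε hε
      rw [him0] at hk
      have hNS : normSq (g c + (ε : ℂ) * c) =
          ((g c).re + ε * c.re) ^ 2 + (ε * c.im) ^ 2 := by
        rw [normSq_apply, hre, him, him0]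
        ring
      rw [hNS] at hk
      have h2 : c.im * ((g c).re + ε * c.re) ^ 2 ≤ c.im * (ε ^ 2 * normSq c) := by
        nlinarith [sq_nonneg (ε * c.im)]
      exact le_of_mul_le_mul_left (by linarith) hc
    have hB : Tendsto (fun ε : ℝ => ((g c).re + ε * c.re) ^ 2) (𝓝[>] (0:ℝ))
        (𝓝 ((g c).re ^ 2)) := by
      have : Tendsto (fun ε : ℝ => ((g c).re + ε * c.re) ^ 2) (𝓝 (0:ℝ))
          (𝓝 (((g c).re + 0 * c.re) ^ 2)) := Continuous.tendsto (by fun_prop) 0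
      simpa using this.mono_left nhdsWithin_le_nhds
    have hA : Tendsto (fun ε : ℝ => ε ^ 2 * normSq c) (𝓝[>] (0:ℝ)) (𝓝 0) := by
      have : Tendsto (fun ε : ℝ => ε ^ 2 * normSq c) (𝓝 (0:ℝ)) (𝓝 (0 ^ 2 * normSq c)) :=
        Continuous.tendsto (by fun_prop) 0
      simpa using this.mono_left nhdsWithin_le_nhds
    have := le_of_tendsto_of_tendsto hB hA
      (by filter_upwards [eventually_mem_nhdsWithin] with ε hε; exact h1 ε hε)
    nlinarith [sq_nonneg ((g c).re)]
  exact Complex.ext (by simpa using hre0) (by simpa using him0)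
end
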